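/- Let α ∈ (0,1), 0 < a < b, g ∈ L¹([a,b]), and x₀ ∈ ℝ. Then the function x(t) := e^(-(1/α)(t/a)^α) · ( e^(1/α) x₀ + ∫_a^t [g(s) · e^((1/α)(s/a)^α)] / s^(1-α) ds ) satisfies x^(α)(t) + a^(-α) x(t) = g(t) for almost every t ∈ [a,b], together with the initial condition x(a) = x₀. -/

import Mathlib

open Filter Real Set

/-- The conformable fractional derivative of `f` of order `α` at `t`,
`T_α(f)(t) = lim_{ε→0} (f(t + ε t^(1-α)) - f t)/ε = L`. -/
def HasConformableDerivAt (α : ℝ) (f : ℝ → ℝ) (t L : ℝ) : Prop :=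
  Tendsto (fun ε : ℝ => (f (t + ε * t ^ (1 - α)) - f t) / ε)
    (nhdsWithin 0 {(0 : ℝ)}ᶜ) (nhds L)

open MeasureTheory

lemma conf_of_hasDerivAt {α : ℝ} {x : ℝ → ℝ} {t L : ℝ} (hx : HasDerivAt x L t) :
    HasConformableDerivAt α x t (t ^ (1 - α) * L) := by
  set c := t ^ (1 - α) with hc
  have h1 : HasDerivAt (fun ε : ℝ => t + ε * c) c 0 := by
    simpa using ((hasDerivAt_id (0:ℝ)).mul_const c).const_add t
  have h2 : HasDerivAt (fun ε : ℝ => x (t + ε * c)) (c * L) 0 := by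
    have hx' : HasDerivAt x L ((fun ε : ℝ => t + ε * c) 0) := by simpa using hx
    simpa [mul_comm, Function.comp_def] using hx'.comp 0 h1
  have := hasDerivAt_iff_tendsto_slope.1 h2
  rw [HasConformableDerivAt, mul_comm]
  convert this using 2 with ε
  simp [slope_def_field, div_eq_inv_mul]
  exact Or.inl rfl
  ring

lemma ae_hasDerivAt_intervalIntegral {a b : ℝ} (hab : a ≤ b) {h : ℝ → ℝ}
    (hh : IntervalIntegrable h volume a b) :
    ∀ᵐ t ∂volume, t ∈ Set.Ioo a b →
      HasDerivAt (fun u => ∫ s in a..u, h s) (h t) t := by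
  set h' : ℝ → ℝ := (Set.Icc a b).indicator h with hh'def
  have hint : IntegrableOn h (Set.Icc a b) := by
    rw [← intervalIntegrable_iff_integrableOn_Icc_of_le hab]; exact hh
  have hint' : Integrable h' volume := by
    rw [hh'def, integrable_indicator_iff measurableSet_Icc]; exact hint
  have hloc : LocallyIntegrable h' volume := hint'.locallyIntegrable
  filter_upwards [IsUnifLocDoublingMeasure.ae_tendsto_average_norm_sub (μ := volume) hloc 1]
    with t hL htIoo
  have hδ : Tendsto (fun y : ℝ => |y - t|) (nhdsWithin t {t}ᶜ) (nhdsWithin 0 (Set.Ioi 0)) := by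
    rw [tendsto_nhdsWithin_iff]
    constructor
    · have h0 : Continuous (fun y : ℝ => |y - t|) := (continuous_id.sub continuous_const).abs
      have := h0.tendsto t
      simp only [sub_self, abs_zero] at this
      exact this.mono_left nhdsWithin_le_nhds
    · filter_upwards [self_mem_nhdsWithin] with y hy
      exact abs_pos.2 (sub_ne_zero.2 hy)
  have hmem : ∀ᶠ y : ℝ in nhdsWithin t {t}ᶜ, t ∈ Metric.closedBall t (1 * |y - t|) := by
    filter_upwards with y
    simp [Metric.mem_closedBall, abs_nonneg]
  have key : Tendsto (fun y : ℝ => ⨍ z in Metric.closedBall t |y - t|, ‖h' z - h' t‖)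
      (nhdsWithin t {t}ᶜ) (nhds 0) := hL (fun _ => t) (fun y => |y - t|) hδ hmem
  set F : ℝ → ℝ := fun u => ∫ s in a..u, h s with hF
  rw [hasDerivAt_iff_tendsto_slope]
  rw [tendsto_iff_norm_sub_tendsto_zero]
  set ε := min (t - a) (b - t) with hε
  have hεpos : 0 < ε := lt_min (by linarith [htIoo.1]) (by linarith [htIoo.2])
  have hbound : ∀ᶠ y : ℝ in nhdsWithin t {t}ᶜ,
      ‖slope F t y - h t‖ ≤ 2 * ⨍ z in Metric.closedBall t |y - t|, ‖h' z - h' t‖ := by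
    have hball : Metric.ball t ε ∈ nhds t := Metric.ball_mem_nhds t hεpos
    filter_upwards [nhdsWithin_le_nhds hball, self_mem_nhdsWithin] with y hy hyne
    have hyt : |y - t| < ε := by simpa [Real.dist_eq] using hy
    have hyne' : y ≠ t := hyne
    have habs : 0 < |y - t| := abs_pos.2 (sub_ne_zero.2 hyne')
    have hsub : Metric.closedBall t |y - t| ⊆ Set.Icc a b := by
      intro z hz
      rw [Metric.mem_closedBall, Real.dist_eq] at hz
      constructor
      · nlinarith [abs_le.1 hz, min_le_left (t-a) (b-t), (abs_le.1 hz).1]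
      · nlinarith [abs_le.1 hz, min_le_right (t-a) (b-t), (abs_le.1 hz).2]
    have hya : a ≤ y := by
      linarith [(abs_le.1 hyt.le).1, min_le_left (t-a) (b-t)]
    have hyb : y ≤ b := by
      linarith [(abs_le.1 hyt.le).2, min_le_right (t-a) (b-t)]
    have hiay : IntervalIntegrable h volume a y :=
      hh.mono_set (by rw [Set.uIcc_of_le hab, Set.uIcc_of_le hya]; exact Set.Icc_subset_Icc le_rfl hyb)
    have hiat : IntervalIntegrable h volume a t :=
      hh.mono_set (by rw [Set.uIcc_of_le hab, Set.uIcc_of_le htIoo.1.le]; exact Set.Icc_subset_Icc le_rfl htIoo.2.le)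
    have hity : IntervalIntegrable h volume t y :=
      hh.mono_set (by
        rw [Set.uIcc_of_le hab]
        exact Set.uIcc_subset_Icc ⟨htIoo.1.le, htIoo.2.le⟩ ⟨hya, hyb⟩)
    have hFdiff : F y - F t = ∫ s in t..y, h s :=
      intervalIntegral.integral_interval_sub_left hiay hiat
    have hconst : ∫ (_ : ℝ) in t..y, h t = (y - t) * h t := by
      simp [intervalIntegral.integral_const, smul_eq_mul]
    have hslope : slope F t y - h t = (∫ s in t..y, (h s - h t)) / (y - t) := by
      rw [intervalIntegral.integral_sub hity intervalIntegrable_const, hconst, ← hFdiff,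
        slope_def_field]
      have hne : y - t ≠ 0 := sub_ne_zero.2 hyne'
      field_simp
    rw [hslope]
    have hIsub : Set.uIoc t y ⊆ Metric.closedBall t |y - t| := by
      intro z hz
      rw [Metric.mem_closedBall, Real.dist_eq]
      rcases le_total t y with hc | hc
      · rw [Set.uIoc_of_le hc] at hz
        rw [abs_of_nonneg (by linarith [hz.1.le]), abs_of_nonneg (by linarith)]
        linarith [hz.2]
      · rw [uIoc, min_eq_right hc, max_eq_left hc] at hz
        rw [abs_of_nonpos (by linarith [hz.2]), abs_of_nonpos (by linarith)]
        linarith [hz.1]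
    have step1 : ‖∫ s in t..y, (h s - h t)‖ ≤ ∫ z in Set.uIoc t y, ‖h z - h t‖ :=
      intervalIntegral.norm_integral_le_integral_norm_uIoc
    have heq : ∀ z ∈ Set.uIoc t y, ‖h z - h t‖ = ‖h' z - h' t‖ := by
      intro z hz
      have hz' : z ∈ Set.Icc a b := hsub (hIsub hz)
      have ht' : t ∈ Set.Icc a b := ⟨htIoo.1.le, htIoo.2.le⟩
      rw [hh'def, Set.indicator_of_mem hz', Set.indicator_of_mem ht']
    have step2 : ∫ z in Set.uIoc t y, ‖h z - h t‖ = ∫ z in Set.uIoc t y, ‖h' z - h' t‖ :=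
      setIntegral_congr_fun measurableSet_uIoc heq
    have hc1 : IntegrableOn h' (Metric.closedBall t |y - t|) volume := hint'.integrableOn
    have hc2 : IntegrableOn (fun _ : ℝ => h' t) (Metric.closedBall t |y - t|) volume :=
      integrableOn_const measure_closedBall_lt_top.ne
    have hintnorm : IntegrableOn (fun z => ‖h' z - h' t‖) (Metric.closedBall t |y - t|) volume :=
      (hc1.sub hc2).norm
    have step3 : ∫ z in Set.uIoc t y, ‖h' z - h' t‖ ≤
        ∫ z in Metric.closedBall t |y - t|, ‖h' z - h' t‖ := by
      apply setIntegral_mono_set hintnorm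
      · filter_upwards with z using norm_nonneg _
      · exact HasSubset.Subset.eventuallyLE hIsub
    have hvol : (volume (Metric.closedBall t |y - t|)).toReal = 2 * |y - t| := by
      rw [Real.volume_closedBall, ENNReal.toReal_ofReal (by positivity)]
    have havg : ∫ z in Metric.closedBall t |y - t|, ‖h' z - h' t‖ =
        (2 * |y - t|) * ⨍ z in Metric.closedBall t |y - t|, ‖h' z - h' t‖ := by
      rw [setAverage_eq, smul_eq_mul, measureReal_def, hvol, ← mul_assoc,
        mul_inv_cancel₀ (by positivity : (2 * |y - t| : ℝ) ≠ 0), one_mul]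
    have hchain : ‖∫ s in t..y, (h s - h t)‖ ≤
        (2 * |y - t|) * ⨍ z in Metric.closedBall t |y - t|, ‖h' z - h' t‖ := by
      rw [← havg]; exact step1.trans (step2 ▸ step3)
    calc ‖(∫ s in t..y, (h s - h t)) / (y - t)‖
        = ‖∫ s in t..y, (h s - h t)‖ / |y - t| := by
          rw [norm_div, Real.norm_eq_abs (y - t)]
      _ ≤ ((2 * |y - t|) * ⨍ z in Metric.closedBall t |y - t|, ‖h' z - h' t‖) / |y - t| := by
          gcongr
      _ = 2 * ⨍ z in Metric.closedBall t |y - t|, ‖h' z - h' t‖ := by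
          field_simp
  have h2key : Tendsto (fun y : ℝ => 2 * ⨍ z in Metric.closedBall t |y - t|, ‖h' z - h' t‖)
      (nhdsWithin t {t}ᶜ) (nhds 0) := by
    simpa using key.const_mul 2
  exact squeeze_zero' (by filter_upwards with y using norm_nonneg _) hbound h2key


theorem stmt6 (α a b x₀ : ℝ) (hα : α ∈ Set.Ioo (0:ℝ) 1) (ha : 0 < a) (hab : a < b)
    (g : ℝ → ℝ) (hg : IntervalIntegrable g MeasureTheory.volume a b)
    (x : ℝ → ℝ)
    (hx : x = fun t => Real.exp (-(1/α) * (t/a) ^ α) *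
      (Real.exp (1/α) * x₀ + ∫ s in a..t, g s * Real.exp ((1/α) * (s/a) ^ α) / s ^ (1 - α))) :
    x a = x₀ ∧
    ∀ᵐ t ∂MeasureTheory.volume, t ∈ Set.Icc a b →
      ∃ d, HasConformableDerivAt α x t d ∧ d + a ^ (-α) * x t = g t := by

  have hα0 : 0 < α := hα.1
  set h : ℝ → ℝ := fun s => g s * Real.exp ((1/α) * (s/a) ^ α) / s ^ (1 - α) with hhdef
  set C : ℝ := Real.exp (1/α) * x₀ with hC
  set F : ℝ → ℝ := fun u => ∫ s in a..u, h s with hF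
  constructor
  · rw [hx]
    simp only [intervalIntegral.integral_same, add_zero, div_self ha.ne', Real.one_rpow,
      mul_one, ← mul_assoc, ← Real.exp_add, neg_add_cancel, Real.exp_zero, one_mul]
    rw [hC, ← mul_assoc, ← Real.exp_add, neg_add_cancel, Real.exp_zero, one_mul]
  · -- integrability of h
    have hψ : ContinuousOn (fun s : ℝ => Real.exp ((1/α) * (s/a) ^ α) / s ^ (1 - α))
        (Set.uIcc a b) := by
      intro s hs
      rw [Set.uIcc_of_le hab.le] at hs
      have hs0 : 0 < s := lt_of_lt_of_le ha hs.1
      apply ContinuousAt.continuousWithinAt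
      have h1 : ContinuousAt (fun s : ℝ => (1/α) * (s/a) ^ α) s :=
        ContinuousAt.mul continuousAt_const
          (ContinuousAt.rpow_const (continuousAt_id.div continuousAt_const ha.ne')
            (Or.inl (by positivity)))
      have h2 : ContinuousAt (fun s : ℝ => s ^ (1 - α)) s :=
        ContinuousAt.rpow_const continuousAt_id (Or.inl hs0.ne')
      exact (Real.continuous_exp.continuousAt.comp h1).div h2 (by positivity)
    have hh : IntervalIntegrable h volume a b := by
      have := hg.mul_continuousOn hψ
      simpa [hhdef, mul_div_assoc] using this
    have haeD := ae_hasDerivAt_intervalIntegral hab.le hh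
    have h1 : ∀ᵐ t : ℝ ∂volume, t ≠ a := by
      rw [MeasureTheory.ae_iff]
      simp only [not_not]
      have : {t : ℝ | t = a} = {a} := by ext z; simp
      rw [this]; exact measure_singleton a
    have h2 : ∀ᵐ t : ℝ ∂volume, t ≠ b := by
      rw [MeasureTheory.ae_iff]
      simp only [not_not]
      have : {t : ℝ | t = b} = {b} := by ext z; simp
      rw [this]; exact measure_singleton b
    filter_upwards [haeD, h1, h2] with t hD hta htb htIcc
    have htIoo : t ∈ Set.Ioo a b := ⟨lt_of_le_of_ne htIcc.1 (Ne.symm hta),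
      lt_of_le_of_ne htIcc.2 htb⟩
    have ht0 : 0 < t := lt_trans ha htIoo.1
    have hFt : HasDerivAt F (h t) t := hD htIoo
    -- derivative of the exponential factor
    have hrp : HasDerivAt (fun s : ℝ => (s/a) ^ α) (1/a * α * (t/a) ^ (α-1)) t := by
      have := ((hasDerivAt_id t).div_const a).rpow_const (p := α) (Or.inl (by positivity))
      simpa using this
    have hu : HasDerivAt (fun s : ℝ => -(1/α) * (s/a) ^ α)
        (-(1/α) * (1/a * α * (t/a) ^ (α-1))) t := hrp.const_mul _
    have hE : HasDerivAt (fun s : ℝ => Real.exp (-(1/α) * (s/a) ^ α))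
        (Real.exp (-(1/α) * (t/a) ^ α) * (-(1/α) * (1/a * α * (t/a) ^ (α-1)))) t := hu.exp
    have hCF : HasDerivAt (fun s : ℝ => C + F s) (h t) t := by exact hFt.const_add C
    have hxD : HasDerivAt x
        ((Real.exp (-(1/α) * (t/a) ^ α) * (-(1/α) * (1/a * α * (t/a) ^ (α-1)))) * (C + F t)
          + Real.exp (-(1/α) * (t/a) ^ α) * h t) t := by
      rw [hx]; exact hE.mul hCF
    refine ⟨_, conf_of_hasDerivAt hxD, ?_⟩
    -- the algebra
    have hxt : x t = Real.exp (-(1/α) * (t/a) ^ α) * (C + F t) := by rw [hx]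
    have hu'eq : -(1/α) * (1/a * α * (t/a) ^ (α-1)) = -((t/a) ^ (α-1) * a⁻¹) := by
      field_simp
    have key1 : t ^ (1 - α) * ((t / a) ^ (α - 1) * a⁻¹) = a ^ (-α) := by
      have k1 : t ^ (1-α) * t ^ (α-1) = 1 := by rw [← Real.rpow_add ht0]; norm_num
      have k2 : a ^ (α-1) * a = a ^ α := by rw [← Real.rpow_add_one ha.ne' (α-1)]; norm_num
      rw [Real.div_rpow ht0.le ha.le]
      calc t ^ (1-α) * (t ^ (α-1) / a ^ (α-1) * a⁻¹)
          = (t ^ (1-α) * t ^ (α-1)) / (a ^ (α-1) * a) := by ring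
        _ = 1 / a ^ α := by rw [k1, k2]
        _ = a ^ (-α) := by rw [Real.rpow_neg ha.le, one_div]
    have key2 : t ^ (1 - α) * (Real.exp (-(1/α) * (t/a) ^ α) * h t) = g t := by
      have hne : t ^ (1 - α) ≠ 0 := by positivity
      have hEE : Real.exp (-(1/α) * (t/a) ^ α) * Real.exp ((1/α) * (t/a) ^ α) = 1 := by
        rw [← Real.exp_add]; simp
      rw [hhdef]
      calc t ^ (1 - α) * (Real.exp (-(1/α) * (t/a) ^ α) *
            (g t * Real.exp ((1/α) * (t/a) ^ α) / t ^ (1 - α)))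
          = (Real.exp (-(1/α) * (t/a) ^ α) * Real.exp ((1/α) * (t/a) ^ α)) * g t
              * (t ^ (1 - α) / t ^ (1 - α)) := by ring
        _ = g t := by rw [hEE, div_self hne]; ring
    rw [hxt, hu'eq]
    rw [mul_add (t ^ (1 - α)), key2]
    have : t ^ (1 - α) * (Real.exp (-(1/α) * (t/a) ^ α) * -((t/a) ^ (α-1) * a⁻¹) * (C + F t))
        = -(a ^ (-α) * (Real.exp (-(1/α) * (t/a) ^ α) * (C + F t))) := by
      rw [← key1]; ring
    rw [this]; ring
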